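/- Let G be a finite connected simple graph, let ρ be a rotation system for G, and suppose there is a vertex v such that γ(v) = v for every γ ∈ Γ_ρ(G). Then the map-automorphism group Γ_ρ(G) is a cyclic group, and every element of Γ_ρ(G) restricts to N(v) as a regular permutation, i.e., all of its cycles on N(v) (counting fixed points as 1-cycles) have one common length, which divides degree(v); in particular a generator of Γ_ρ(G) restricts to N(v) as a d-regular permutation for some divisor d of degree(v). -/

import Mathlib

/-- A rotation system for a simple graph `G`. -/
def IsRotationSystem {V : Type*} (G : SimpleGraph V) (ρ : V → Equiv.Perm V) : Prop :=
  ∀ v : V, (ρ v).IsCycleOn (G.neighborSet v) ∧ ∀ w : V, w ∉ G.neighborSet v → ρ v w = w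

/-- The action of a permutation `γ` on rotation systems: `(γ·ρ)_{γ(v)} = γ ∘ ρ_v ∘ γ⁻¹`. -/
def rotAct {V : Type*} (γ : Equiv.Perm V) (ρ : V → Equiv.Perm V) : V → Equiv.Perm V :=
  fun w => γ * ρ (γ⁻¹ w) * γ⁻¹

/-- The automorphism group `Γ(G)` of a simple graph, as a set of permutations. -/
def autSet {V : Type*} (G : SimpleGraph V) : Set (Equiv.Perm V) :=
  {γ | ∀ u w : V, G.Adj (γ u) (γ w) ↔ G.Adj u w}

/-- The length of the orbit of `w` under the cyclic group generated by `γ`. -/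
noncomputable def orbitLen {V : Type*} (γ : Equiv.Perm V) (w : V) : ℕ :=
  ({y | ∃ k : ℕ, (γ ^ k) w = y}).ncard

lemma rotAct_one' {V : Type*} (ρ : V → Equiv.Perm V) : rotAct 1 ρ = ρ := by
  funext w; simp [rotAct]

lemma rotAct_mul' {V : Type*} (γ δ : Equiv.Perm V) (ρ : V → Equiv.Perm V) :
    rotAct (γ * δ) ρ = rotAct γ (rotAct δ ρ) := by
  funext w
  simp [rotAct, mul_assoc, Equiv.Perm.mul_apply]

lemma autSet_one {V : Type*} (G : SimpleGraph V) : (1 : Equiv.Perm V) ∈ autSet G := by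
  intro u w; simp

lemma autSet_mul {V : Type*} {G : SimpleGraph V} {γ δ : Equiv.Perm V}
    (hγ : γ ∈ autSet G) (hδ : δ ∈ autSet G) : γ * δ ∈ autSet G := by
  intro u w
  simpa [Equiv.Perm.mul_apply] using (hγ (δ u) (δ w)).trans (hδ u w)

lemma autSet_inv {V : Type*} {G : SimpleGraph V} {γ : Equiv.Perm V}
    (hγ : γ ∈ autSet G) : γ⁻¹ ∈ autSet G := by
  intro u w
  have := hγ (γ⁻¹ u) (γ⁻¹ w)
  simpa using this.symm

/-- The stabilizer conditions are closed under 1, mul, inv. -/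
lemma S_one {V : Type*} (G : SimpleGraph V) (ρ : V → Equiv.Perm V) :
    (1 : Equiv.Perm V) ∈ autSet G ∧ rotAct 1 ρ = ρ :=
  ⟨autSet_one G, rotAct_one' ρ⟩

lemma S_mul {V : Type*} {G : SimpleGraph V} {ρ : V → Equiv.Perm V} {γ δ : Equiv.Perm V}
    (hγ : γ ∈ autSet G ∧ rotAct γ ρ = ρ) (hδ : δ ∈ autSet G ∧ rotAct δ ρ = ρ) :
    γ * δ ∈ autSet G ∧ rotAct (γ * δ) ρ = ρ := by
  refine ⟨autSet_mul hγ.1 hδ.1, ?_⟩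
  rw [rotAct_mul', hδ.2, hγ.2]

lemma S_inv {V : Type*} {G : SimpleGraph V} {ρ : V → Equiv.Perm V} {γ : Equiv.Perm V}
    (hγ : γ ∈ autSet G ∧ rotAct γ ρ = ρ) :
    γ⁻¹ ∈ autSet G ∧ rotAct γ⁻¹ ρ = ρ := by
  refine ⟨autSet_inv hγ.1, ?_⟩
  calc rotAct γ⁻¹ ρ = rotAct γ⁻¹ (rotAct γ ρ) := by rw [hγ.2]
    _ = rotAct (γ⁻¹ * γ) ρ := (rotAct_mul' _ _ _).symm
    _ = ρ := by rw [inv_mul_cancel, rotAct_one']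

lemma S_pow {V : Type*} {G : SimpleGraph V} {ρ : V → Equiv.Perm V} {γ : Equiv.Perm V}
    (hγ : γ ∈ autSet G ∧ rotAct γ ρ = ρ) (k : ℕ) :
    γ ^ k ∈ autSet G ∧ rotAct (γ ^ k) ρ = ρ := by
  induction k with
  | zero => simpa using S_one G ρ
  | succ k ih => rw [pow_succ]; exact S_mul ih hγ

/-- If `γ` preserves the rotation system and fixes `u`, it commutes with `ρ u`. -/
lemma commute_of_fix {V : Type*} {ρ : V → Equiv.Perm V} {γ : Equiv.Perm V}
    (hγ : rotAct γ ρ = ρ) {u : V} (hu : γ u = u) : Commute γ (ρ u) := by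
  have h1 : γ⁻¹ u = u := by rw [Equiv.Perm.inv_eq_iff_eq, hu]
  have h2 : γ * ρ u * γ⁻¹ = ρ u := by
    have := congrFun hγ u
    rwa [rotAct, h1] at this
  have := congrArg (· * γ) h2
  exact (show γ * ρ u = ρ u * γ by simpa [mul_assoc] using this)

lemma mapsTo_neighborSet {V : Type*} {G : SimpleGraph V} {γ : Equiv.Perm V}
    (hγ : γ ∈ autSet G) {u : V} (hu : γ u = u) {w : V} (hw : w ∈ G.neighborSet u) :
    γ w ∈ G.neighborSet u := by
  rw [SimpleGraph.mem_neighborSet] at hw ⊢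
  rw [← hu]
  exact (hγ u w).mpr hw

/-- If `γ` commutes with a cycle on `s` and fixes one point of `s`, it fixes all of `s`. -/
lemma fix_all_of_fix_one {V : Type*} [Finite V] {c γ : Equiv.Perm V} {s : Set V}
    (hcyc : c.IsCycleOn s) (hcomm : Commute γ c) {w₀ : V} (hw₀ : w₀ ∈ s) (hfix : γ w₀ = w₀) :
    ∀ x ∈ s, γ x = x := by
  intro x hx
  obtain ⟨k, hk⟩ := (hcyc.2 hw₀ hx).exists_pow_eq'
  obtain ⟨_, rfl⟩ := hk
  calc γ ((c ^ k) w₀) = ((c ^ k) * γ) w₀ := by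
        rw [← (hcomm.pow_right k).eq]; rfl
    _ = (c ^ k) w₀ := by rw [Equiv.Perm.mul_apply, hfix]

/-- Rigidity: a stabilizer element fixing a vertex and all its neighbors is the identity. -/
lemma rigidity {V : Type*} [Finite V] {G : SimpleGraph V} (hG : G.Connected)
    {ρ : V → Equiv.Perm V} (hρ : IsRotationSystem G ρ) {γ : Equiv.Perm V}
    (hγaut : γ ∈ autSet G) (hγrot : rotAct γ ρ = ρ) {v : V} (hv : γ v = v)
    (hN : ∀ x ∈ G.neighborSet v, γ x = x) : γ = 1 := by
  have key : ∀ (a b : V), G.Walk a b →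
      (γ a = a ∧ ∀ x ∈ G.neighborSet a, γ x = x) →
      (γ b = b ∧ ∀ x ∈ G.neighborSet b, γ x = x) := by
    intro a b p
    induction p with
    | nil => exact id
    | @cons u x w' hadj q ih =>
      intro hu
      apply ih
      have hx : γ x = x := hu.2 x ((SimpleGraph.mem_neighborSet G u x).mpr hadj)
      have hcomm : Commute γ (ρ x) := commute_of_fix hγrot hx
      have humem : u ∈ G.neighborSet x := (SimpleGraph.mem_neighborSet G x u).mpr hadj.symm
      exact ⟨hx, fix_all_of_fix_one (hρ x).1 hcomm humem hu.1⟩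
  apply Equiv.ext
  intro u
  obtain ⟨p⟩ := hG.preconnected v u
  simpa using (key v u p ⟨hv, hN⟩).1

lemma orbitLen_eq_minimalPeriod {V : Type*} [Finite V] (γ : Equiv.Perm V) (w : V) :
    orbitLen γ w = Function.minimalPeriod ⇑γ w := by
  have hper : w ∈ Function.periodicPts ⇑γ := by
    refine Function.mk_mem_periodicPts (orderOf_pos γ) ?_
    show (⇑γ)^[orderOf γ] w = w
    rw [Equiv.Perm.iterate_eq_pow, pow_orderOf_eq_one]
    rfl
  have hmpos : 0 < Function.minimalPeriod ⇑γ w :=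
    Function.minimalPeriod_pos_of_mem_periodicPts hper
  have hset : {y | ∃ k : ℕ, (γ ^ k) w = y} =
      (fun k => (γ ^ k) w) '' Set.Iio (Function.minimalPeriod ⇑γ w) := by
    ext y
    constructor
    · rintro ⟨k, rfl⟩
      refine ⟨k % Function.minimalPeriod ⇑γ w, Nat.mod_lt _ hmpos, ?_⟩
      show (γ ^ (k % Function.minimalPeriod ⇑γ w)) w = (γ ^ k) w
      rw [← Equiv.Perm.iterate_eq_pow, ← Equiv.Perm.iterate_eq_pow]
      exact Function.iterate_mod_minimalPeriod_eq
    · rintro ⟨k, -, rfl⟩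
      exact ⟨k, rfl⟩
  have hinj : Set.InjOn (fun k => (γ ^ k) w) (Set.Iio (Function.minimalPeriod ⇑γ w)) :=
    Function.iterate_injOn_Iio_minimalPeriod
  rw [orbitLen, hset, Set.ncard_image_of_injOn hinj, ← Finset.coe_range,
    Set.ncard_coe_finset, Finset.card_range]

lemma minimalPeriod_eq_of_iff {V : Type*} [Finite V] (γ : Equiv.Perm V) (w : V) {d : ℕ}
    (hd : 0 < d) (hiff : ∀ t : ℕ, (γ ^ t) w = w ↔ d ∣ t) :
    Function.minimalPeriod ⇑γ w = d := by
  have h1 : Function.IsPeriodicPt ⇑γ d w := by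
    show (⇑γ)^[d] w = w
    rw [Equiv.Perm.iterate_eq_pow]
    exact (hiff d).mpr dvd_rfl
  have h2 : d ∣ Function.minimalPeriod ⇑γ w := by
    have h3 := Function.isPeriodicPt_minimalPeriod ⇑γ w
    rw [Function.IsPeriodicPt, Function.IsFixedPt, Equiv.Perm.iterate_eq_pow] at h3
    exact (hiff _).mp h3
  exact Nat.dvd_antisymm h1.minimalPeriod_dvd h2

/-- Theorem: if every member of the map-automorphism group `Γ_ρ(G)` of a connected graph fixes
the same vertex `v`, then `Γ_ρ(G)` is cyclic, and every member of `Γ_ρ(G)` restricts to the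
neighborhood `N(v)` as a `d`-regular permutation for some divisor `d` of `degree(v)`
(in particular this holds for a generator). -/
theorem map_automorphism_group_cyclic_of_fixed_vertex {V : Type*} [Fintype V] [DecidableEq V]
    (G : SimpleGraph V) (hG : G.Connected)
    (ρ : V → Equiv.Perm V) (hρ : IsRotationSystem G ρ) (v : V)
    (hv : ∀ γ ∈ {γ ∈ autSet G | rotAct γ ρ = ρ}, γ v = v) :
    (∃ γ₀ ∈ {γ ∈ autSet G | rotAct γ ρ = ρ},
        ∀ γ ∈ {γ ∈ autSet G | rotAct γ ρ = ρ}, ∃ k : ℕ, γ = γ₀ ^ k) ∧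
      (∀ γ ∈ {γ ∈ autSet G | rotAct γ ρ = ρ},
        ∃ d : ℕ, d ∣ (G.neighborSet v).ncard ∧ ∀ w ∈ G.neighborSet v, orbitLen γ w = d) := by
  classical
  set S := {γ ∈ autSet G | rotAct γ ρ = ρ} with hSdef
  have hmem : ∀ γ : Equiv.Perm V, γ ∈ S ↔ γ ∈ autSet G ∧ rotAct γ ρ = ρ := fun γ => Iff.rfl
  have h1S : (1 : Equiv.Perm V) ∈ S := (hmem 1).mpr (S_one G ρ)
  set c := ρ v with hc
  set n := (G.neighborSet v).ncard with hn
  have hcycset : c.IsCycleOn (G.neighborSet v) := (hρ v).1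
  -- basic facts about elements of S
  have hcommc : ∀ γ, γ ∈ S → Commute γ c := fun γ hγ =>
    commute_of_fix ((hmem γ).mp hγ).2 (hv γ hγ)
  have hγmaps : ∀ γ, γ ∈ S → ∀ {w : V}, w ∈ G.neighborSet v → γ w ∈ G.neighborSet v := by
    intro γ hγ w hw
    exact mapsTo_neighborSet ((hmem γ).mp hγ).1 (hv γ hγ) hw
  rcases Nat.eq_zero_or_pos n with hn0 | hnpos
  · -- degenerate case : `v` has no neighbors
    have hempty : G.neighborSet v = ∅ := by
      rw [← Set.ncard_eq_zero (Set.toFinite _)]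
      exact hn0.symm ▸ hn.symm
    have hall : ∀ γ ∈ S, γ = 1 := fun γ hγ =>
      rigidity hG hρ ((hmem γ).mp hγ).1 ((hmem γ).mp hγ).2 (hv γ hγ)
        (by rw [hempty]; intro x hx; exact absurd hx (Set.notMem_empty x))
    constructor
    · exact ⟨1, h1S, fun γ hγ => ⟨0, by rw [hall γ hγ, pow_zero]⟩⟩
    · intro γ hγ
      refine ⟨0, by simp [hn0], ?_⟩
      intro w hw
      rw [hempty] at hw
      exact absurd hw (Set.notMem_empty w)
  · -- main case
    obtain ⟨w₀, hw₀⟩ : (G.neighborSet v).Nonempty :=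
      (Set.ncard_pos (Set.toFinite _)).mp (hn ▸ hnpos)
    -- powers of the cycle preserve the neighborhood
    have hcmaps : ∀ (s : ℕ) {w : V}, w ∈ G.neighborSet v → (c ^ s) w ∈ G.neighborSet v := by
      intro s w hw
      have hmt : Set.MapsTo ⇑(c ^ s) (G.neighborSet v) (G.neighborSet v) := by
        rw [Equiv.Perm.coe_pow]
        exact (hcycset.1.mapsTo).iterate s
      exact hmt hw
    -- characterization of fixed points of powers of the cycle
    have hsfin : (G.neighborSet v).Finite := Set.toFinite _
    have hcycF : c.IsCycleOn ↑hsfin.toFinset := by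
      rw [Set.Finite.coe_toFinset]; exact hcycset
    have hcardF : hsfin.toFinset.card = n := by
      rw [hn, Set.ncard_eq_toFinset_card _ hsfin]
    have hpow_eq : ∀ {w : V}, w ∈ G.neighborSet v → ∀ {t : ℕ}, ((c ^ t) w = w ↔ n ∣ t) := by
      intro w hw t
      rw [← hcardF]
      exact hcycF.pow_apply_eq (by rwa [Set.Finite.mem_toFinset])
    -- existence of an exponent for each element of S
    have hexp : ∀ γ ∈ S, ∃ j : ℕ, (c ^ j) w₀ = γ w₀ := by
      intro γ hγ
      obtain ⟨j, -, hj⟩ := (hcycset.2 hw₀ (hγmaps γ hγ hw₀)).exists_pow_eq'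
      exact ⟨j, hj⟩
    -- the exponent determines γ on all of the neighborhood
    have hagree : ∀ γ, γ ∈ S → ∀ {j : ℕ}, (c ^ j) w₀ = γ w₀ →
        ∀ {w : V}, w ∈ G.neighborSet v → γ w = (c ^ j) w := by
      intro γ hγ j hj w hw
      obtain ⟨k, -, hk⟩ := (hcycset.2 hw₀ hw).exists_pow_eq'
      rw [← hk]
      calc γ ((c ^ k) w₀) = (γ * c ^ k) w₀ := rfl
        _ = (c ^ k * γ) w₀ := by rw [((hcommc γ hγ).pow_right k).eq]
        _ = (c ^ k) (γ w₀) := rfl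
        _ = (c ^ k) ((c ^ j) w₀) := by rw [← hj]
        _ = (c ^ k * c ^ j) w₀ := rfl
        _ = (c ^ j * c ^ k) w₀ := by rw [pow_mul_comm]
        _ = (c ^ j) ((c ^ k) w₀) := rfl
    -- powers of γ act as powers of the cycle on the neighborhood
    have hpow : ∀ γ, γ ∈ S → ∀ {j : ℕ}, (c ^ j) w₀ = γ w₀ →
        ∀ (t : ℕ) {w : V}, w ∈ G.neighborSet v → (γ ^ t) w = (c ^ (t * j)) w := by
      intro γ hγ j hj t
      induction t with
      | zero => intro w hw; simp
      | succ t ih =>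
        intro w hw
        have h1 : (γ ^ (t + 1)) w = γ ((γ ^ t) w) := by
          rw [pow_succ', Equiv.Perm.mul_apply]
        rw [h1, ih hw, hagree γ hγ hj (hcmaps (t * j) hw)]
        calc (c ^ j) ((c ^ (t * j)) w) = (c ^ j * c ^ (t * j)) w := rfl
          _ = (c ^ (j + t * j)) w := by rw [← pow_add]
          _ = (c ^ ((t + 1) * j)) w := by ring_nf
    -- part 2 : regularity of the restriction to the neighborhood
    have part2 : ∀ γ ∈ S,
        ∃ d : ℕ, d ∣ n ∧ ∀ w ∈ G.neighborSet v, orbitLen γ w = d := by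
      intro γ hγ
      obtain ⟨j, hj⟩ := hexp γ hγ
      set g := Nat.gcd n j with hg
      have hgpos : 0 < g := Nat.gcd_pos_of_pos_left j hnpos
      obtain ⟨n', hn'⟩ : g ∣ n := Nat.gcd_dvd_left n j
      obtain ⟨j', hj'⟩ : g ∣ j := Nat.gcd_dvd_right n j
      have hng : n / g = n' := by rw [hn', Nat.mul_div_cancel_left _ hgpos]
      have hjg : j / g = j' := by rw [hj', Nat.mul_div_cancel_left _ hgpos]
      have hcop : Nat.Coprime n' j' := by
        have := Nat.coprime_div_gcd_div_gcd (m := n) (n := j) hgpos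
        rwa [← hg, hng, hjg] at this
      have hdvdn : n / g ∣ n := Nat.div_dvd_of_dvd (Nat.gcd_dvd_left n j)
      refine ⟨n / g, hdvdn, ?_⟩
      intro w hw
      have hdpos : 0 < n / g :=
        Nat.div_pos (Nat.le_of_dvd hnpos (Nat.gcd_dvd_left n j)) hgpos
      rw [orbitLen_eq_minimalPeriod]
      apply minimalPeriod_eq_of_iff γ w hdpos
      intro t
      rw [hpow γ hγ hj t hw, hpow_eq hw, hng]
      constructor
      · intro hdvd
        rw [hn', hj', ← mul_assoc, mul_comm t g, mul_assoc] at hdvd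
        have := (Nat.mul_dvd_mul_iff_left hgpos).mp hdvd
        exact hcop.dvd_of_dvd_mul_right this
      · intro hdvd
        rw [hn', hj', ← mul_assoc, mul_comm t g, mul_assoc]
        exact Nat.mul_dvd_mul_left g (hdvd.mul_right j')
    refine ⟨?_, part2⟩
    -- part 1 : the group is cyclic
    set E := {k : ℕ | 0 < k ∧ ∃ γ, γ ∈ S ∧ (c ^ k) w₀ = γ w₀} with hE
    have hnE : n ∈ E := by
      refine ⟨hnpos, 1, h1S, ?_⟩
      have h1 : (c ^ n) w₀ = w₀ := (hpow_eq hw₀).mpr dvd_rfl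
      simpa using h1
    have hEne : E.Nonempty := ⟨n, hnE⟩
    set m := sInf E with hm
    have hmE : m ∈ E := Nat.sInf_mem hEne
    obtain ⟨hmpos, γ₀, hγ₀S, hγ₀⟩ := hmE
    refine ⟨γ₀, hγ₀S, ?_⟩
    intro γ hγ
    obtain ⟨j, hj⟩ := hexp γ hγ
    set q := j / m with hq
    set r := j % m with hr
    have hδS : (γ₀ ^ q)⁻¹ * γ ∈ S :=
      (hmem _).mpr (S_mul (S_inv ((hmem _).mp (((hmem _).mpr (S_pow ((hmem _).mp hγ₀S) q)))))
        ((hmem _).mp hγ))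
    have hδw : ((γ₀ ^ q)⁻¹ * γ) w₀ = (c ^ r) w₀ := by
      have h1 : (γ₀ ^ q) ((c ^ r) w₀) = γ w₀ := by
        rw [hpow γ₀ hγ₀S hγ₀ q (hcmaps r hw₀)]
        have h2 : (c ^ (q * m)) ((c ^ r) w₀) = (c ^ (q * m + r)) w₀ := by
          rw [pow_add]; rfl
        rw [h2]
        have h3 : q * m + r = j := by
          rw [hq, hr, mul_comm]
          exact Nat.div_add_mod j m
        rw [h3, hj]
      calc ((γ₀ ^ q)⁻¹ * γ) w₀ = (γ₀ ^ q)⁻¹ (γ w₀) := rfl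
        _ = (γ₀ ^ q)⁻¹ ((γ₀ ^ q) ((c ^ r) w₀)) := by rw [h1]
        _ = (c ^ r) w₀ := by simp
    rcases Nat.eq_zero_or_pos r with hr0 | hrpos
    · have hδ1 : (γ₀ ^ q)⁻¹ * γ = 1 := by
        apply rigidity hG hρ ((hmem _).mp hδS).1 ((hmem _).mp hδS).2 (hv _ hδS)
        apply fix_all_of_fix_one hcycset (hcommc _ hδS) hw₀
        rw [hδw, hr0, pow_zero]
        rfl
      exact ⟨q, (inv_mul_eq_one.mp hδ1).symm⟩
    · exfalso
      have hrE : r ∈ E := ⟨hrpos, _, hδS, hδw.symm⟩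
      have hle : m ≤ r := Nat.sInf_le hrE
      have hlt : r < m := Nat.mod_lt j hmpos
      omega
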